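/- Let V be a right Banach ℍ-module, T ∈ B(V), and let P₁ ∈ B(V) satisfy P₁² = P₁ and T P₁ = P₁ T; set P₂ := I − P₁. Then the ranges R(P₁) and R(P₂) are closed T-invariant right ℍ-submodules of V (hence themselves right Banach ℍ-modules), the restrictions T|_{R(P₁)} and T|_{R(P₂)} are bounded right ℍ-linear operators, and σ_e^S(T) = σ_e^S(T|_{R(P₁)}) ∪ σ_e^S(T|_{R(P₂)}). -/

import Mathlib

/-!
Quaternionic setting: `ℍ` is the real quaternions.  A right Banach `ℍ`-module is
formalized as a real Banach space `V` together with a compatible `Module ℍᵐᵒᵖ V`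
structure (right `ℍ`-action) satisfying `‖x • q‖ = ‖x‖ * |q|`; bounded right
`ℍ`-linear operators are the continuous `ℍᵐᵒᵖ`-linear maps `V →L[ℍᵐᵒᵖ] V`.
-/

open MulOpposite

notation "ℍ" => Quaternion ℝ

section Defs

variable {W : Type*} [NormedAddCommGroup W] [Module ℍᵐᵒᵖ W] [Module ℝ W]
  [SMulCommClass ℍᵐᵒᵖ ℝ W] [ContinuousConstSMul ℝ W]

/-- `Q_q(T) = T² − 2 Re(q) T + |q|² I`. -/
noncomputable def Qs (T : W →L[ℍᵐᵒᵖ] W) (q : ℍ) : W →L[ℍᵐᵒᵖ] W :=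
  T * T - (2 * q.re) • T + (‖q‖ ^ 2) • (1 : W →L[ℍᵐᵒᵖ] W)

/-- The S-resolvent set: `q` such that `Q_q(T)` is bijective with bounded inverse,
i.e. invertible in the ring `B(W)`. -/
noncomputable def sResolvent (T : W →L[ℍᵐᵒᵖ] W) : Set ℍ :=
  {q | IsUnit (Qs T q)}

/-- The S-spectrum `σ_S(T) = ℍ \ ρ_S(T)`. -/
noncomputable def sSpectrum (T : W →L[ℍᵐᵒᵖ] W) : Set ℍ :=
  {q | ¬ IsUnit (Qs T q)}

/-- A compact operator: the image of the closed unit ball is relatively compact. -/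
def IsCompactOp (K : W →L[ℍᵐᵒᵖ] W) : Prop :=
  IsCompact (closure (⇑K '' Metric.closedBall (0 : W) 1))

/-- `S` is a quasi-inverse of `T` if `S T = I - K₁` and `T S = I - K₂` with `K₁, K₂` compact. -/
def IsQuasiInverse (S T : W →L[ℍᵐᵒᵖ] W) : Prop :=
  ∃ K₁ K₂ : W →L[ℍᵐᵒᵖ] W, IsCompactOp K₁ ∧ IsCompactOp K₂ ∧
    S * T = 1 - K₁ ∧ T * S = 1 - K₂

/-- The essential S-spectrum: `q` such that `Q_q(T)` admits no quasi-inverse. -/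
noncomputable def essSpectrum (T : W →L[ℍᵐᵒᵖ] W) : Set ℍ :=
  {q | ¬ ∃ S : W →L[ℍᵐᵒᵖ] W, IsQuasiInverse S (Qs T q)}

/-- The Weyl S-spectrum: `⋂ σ_S(T + K)` over all compact `K`. -/
noncomputable def weylSpectrum (T : W →L[ℍᵐᵒᵖ] W) : Set ℍ :=
  ⋂ K ∈ {K : W →L[ℍᵐᵒᵖ] W | IsCompactOp K}, sSpectrum (T + K)

/-- The 2-sphere `[q] = {h q h⁻¹ : h ∈ ℍ \ {0}}`. -/
def qSphere (q : ℍ) : Set ℍ := {p | ∃ h : ℍ, h ≠ 0 ∧ p = h * q * h⁻¹}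

/-- Minimum modulus `μ(T) = inf {‖T x‖ : ‖x‖ = 1}`. -/
noncomputable def muMin (T : W →L[ℍᵐᵒᵖ] W) : ℝ :=
  sInf {c : ℝ | ∃ x : W, ‖x‖ = 1 ∧ c = ‖T x‖}

/-- Operator norm of a bounded right `ℍ`-linear operator. -/
noncomputable def opNorm (T : W →L[ℍᵐᵒᵖ] W) : ℝ :=
  sInf {c : ℝ | 0 ≤ c ∧ ∀ x : W, ‖T x‖ ≤ c * ‖x‖}

/-- Restriction of `T` to an invariant submodule. -/
noncomputable def restrictOp (T : W →L[ℍᵐᵒᵖ] W) (M : Submodule ℍᵐᵒᵖ W)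
    (h : ∀ x ∈ M, T x ∈ M) : ↥M →L[ℍᵐᵒᵖ] ↥M where
  toLinearMap := (T : W →ₗ[ℍᵐᵒᵖ] W).restrict h
  cont := Continuous.subtype_mk (T.continuous.comp continuous_subtype_val) _

end Defs

section Sub

variable {V : Type*} [NormedAddCommGroup V] [NormedSpace ℝ V]
  [Module ℍᵐᵒᵖ V] [IsScalarTower ℝ ℍᵐᵒᵖ V] [SMulCommClass ℍᵐᵒᵖ ℝ V]

instance (M : Submodule ℍᵐᵒᵖ V) : SMulCommClass ℍᵐᵒᵖ ℝ ↥M := by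
  constructor
  intro q r x
  apply Subtype.ext
  simp only [Submodule.coe_smul_of_tower, SetLike.val_smul]
  exact smul_comm q r (x : V)

instance (M : Submodule ℍᵐᵒᵖ V) : ContinuousConstSMul ℝ ↥M := by
  constructor
  intro r
  have h : Continuous fun x : ↥M => r • (x : V) :=
    (continuous_const_smul r).comp continuous_subtype_val
  exact Continuous.subtype_mk h _

/-- `q` is a right eigenvalue of finite type of `T`: `V` is the direct sum of two closed
`T`-invariant right `ℍ`-submodules `M₁`, `M₂` with `M₁` finite-dimensional over `ℍ`,
`σ_S(T|M₁) ∩ σ_S(T|M₂) = ∅` and `σ_S(T|M₁) = [q]`. -/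
noncomputable def IsFiniteTypeEigenvalue (T : V →L[ℍᵐᵒᵖ] V) (q : ℍ) : Prop :=
  ∃ (M₁ M₂ : Submodule ℍᵐᵒᵖ V) (h₁ : ∀ x ∈ M₁, T x ∈ M₁) (h₂ : ∀ x ∈ M₂, T x ∈ M₂),
    IsClosed (M₁ : Set V) ∧ IsClosed (M₂ : Set V) ∧ IsCompl M₁ M₂ ∧
    FiniteDimensional ℍᵐᵒᵖ ↥M₁ ∧
    sSpectrum (restrictOp T M₁ h₁) ∩ sSpectrum (restrictOp T M₂ h₂) = ∅ ∧
    sSpectrum (restrictOp T M₁ h₁) = qSphere q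

end Sub

section AuxDefs

variable {W : Type*} [NormedAddCommGroup W] [Module ℍᵐᵒᵖ W] [Module ℝ W]
  [SMulCommClass ℍᵐᵒᵖ ℝ W] [ContinuousConstSMul ℝ W]

lemma Qs_apply (T : W →L[ℍᵐᵒᵖ] W) (q : ℍ) (x : W) :
    Qs T q x = T (T x) - (2 * q.re) • T x + (‖q‖ ^ 2) • x := by
  simp [Qs, ContinuousLinearMap.sub_apply, ContinuousLinearMap.add_apply,
    ContinuousLinearMap.smul_apply, ContinuousLinearMap.mul_apply,
    ContinuousLinearMap.one_apply]

end AuxDefs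

section AuxSub

variable {V : Type*} [NormedAddCommGroup V] [NormedSpace ℝ V]
  [Module ℍᵐᵒᵖ V] [IsScalarTower ℝ ℍᵐᵒᵖ V] [SMulCommClass ℍᵐᵒᵖ ℝ V]

set_option linter.unusedSectionVars false

lemma clm_smul_real (K : V →L[ℍᵐᵒᵖ] V) (r : ℝ) (x : V) : K (r • x) = r • K x := by
  rw [← smul_one_smul ℍᵐᵒᵖ r x, map_smul, smul_one_smul]

noncomputable def realLin (K : V →L[ℍᵐᵒᵖ] V) : V →ₗ[ℝ] V where
  toFun := K
  map_add' := map_add K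
  map_smul' := fun r x => by simp only [RingHom.id_apply]; exact clm_smul_real K r x

lemma compactOp_iff (K : V →L[ℍᵐᵒᵖ] V) : IsCompactOp K ↔ IsCompactOperator ⇑K := by
  have h := isCompactOperator_iff_isCompact_closure_image_closedBall (realLin K) one_pos
  exact h.symm

lemma restrictOp_coe (T : V →L[ℍᵐᵒᵖ] V) (M : Submodule ℍᵐᵒᵖ V) (h : ∀ x ∈ M, T x ∈ M)
    (x : ↥M) : ((restrictOp T M h) x : V) = T x := rfl

lemma Qs_inv (T : V →L[ℍᵐᵒᵖ] V) (M : Submodule ℍᵐᵒᵖ V) (h : ∀ x ∈ M, T x ∈ M) (q : ℍ) :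
    ∀ x ∈ M, Qs T q x ∈ M := by
  intro x hx
  rw [Qs_apply]
  exact M.add_mem (M.sub_mem (h _ (h _ hx)) (M.smul_of_tower_mem _ (h _ hx)))
    (M.smul_of_tower_mem _ hx)

lemma Qs_restrictOp (T : V →L[ℍᵐᵒᵖ] V) (M : Submodule ℍᵐᵒᵖ V) (h : ∀ x ∈ M, T x ∈ M) (q : ℍ) :
    Qs (restrictOp T M h) q = restrictOp (Qs T q) M (Qs_inv T M h q) := by
  ext x
  simp [Qs_apply, restrictOp_coe]


lemma quasi_down (Q P : V →L[ℍᵐᵒᵖ] V) (M : Submodule ℍᵐᵒᵖ V)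
    (hMc : IsClosed (M : Set V))
    (hPmem : ∀ x, P x ∈ M) (hPfix : ∀ x ∈ M, P x = x)
    (hPQ : ∀ x, P (Q x) = Q (P x))
    (hQM : ∀ x ∈ M, Q x ∈ M)
    {S : V →L[ℍᵐᵒᵖ] V} (hS : IsQuasiInverse S Q) :
    ∃ S', IsQuasiInverse S' (restrictOp Q M hQM) := by
  obtain ⟨K₁, K₂, hK₁, hK₂, h₁, h₂⟩ := hS
  have h₁' : ∀ x, S (Q x) = x - K₁ x := by
    intro x
    have := ContinuousLinearMap.ext_iff.mp h₁ x
    simpa using this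
  have h₂' : ∀ x, Q (S x) = x - K₂ x := by
    intro x
    have := ContinuousLinearMap.ext_iff.mp h₂ x
    simpa using this
  set ι := M.subtypeL with hι
  set π : V →L[ℍᵐᵒᵖ] ↥M := P.codRestrict M hPmem with hπ
  refine ⟨π.comp (S.comp ι), π.comp (K₁.comp ι), π.comp (K₂.comp ι), ?_, ?_, ?_, ?_⟩
  · rw [compactOp_iff]
    exact (((compactOp_iff K₁).mp hK₁).comp_clm ι).clm_comp π
  · rw [compactOp_iff]
    exact (((compactOp_iff K₂).mp hK₂).comp_clm ι).clm_comp π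
  · ext x
    have : P (S (Q (x : V))) = (x : V) - P (K₁ (x : V)) := by
      rw [h₁' (x : V), map_sub, hPfix _ x.2]
    simpa [ContinuousLinearMap.mul_apply, restrictOp_coe, hπ, hι] using this
  · ext x
    have : Q (P (S (x : V))) = (x : V) - P (K₂ (x : V)) := by
      rw [← hPQ, h₂' (x : V), map_sub, hPfix _ x.2]
    simpa [ContinuousLinearMap.mul_apply, restrictOp_coe, hπ, hι] using this


lemma quasi_up (Q P₁ P₂ : V →L[ℍᵐᵒᵖ] V) (M₁ M₂ : Submodule ℍᵐᵒᵖ V)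
    (hP₁mem : ∀ x, P₁ x ∈ M₁) (hP₂mem : ∀ x, P₂ x ∈ M₂)
    (hP₁fix : ∀ x ∈ M₁, P₁ x = x) (hP₂fix : ∀ x ∈ M₂, P₂ x = x)
    (hPQ₁ : ∀ x, P₁ (Q x) = Q (P₁ x)) (hPQ₂ : ∀ x, P₂ (Q x) = Q (P₂ x))
    (hsum : ∀ x, P₁ x + P₂ x = x)
    (hQ₁ : ∀ x ∈ M₁, Q x ∈ M₁) (hQ₂ : ∀ x ∈ M₂, Q x ∈ M₂)
    {S₁ : ↥M₁ →L[ℍᵐᵒᵖ] ↥M₁} (hS₁ : IsQuasiInverse S₁ (restrictOp Q M₁ hQ₁))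
    {S₂ : ↥M₂ →L[ℍᵐᵒᵖ] ↥M₂} (hS₂ : IsQuasiInverse S₂ (restrictOp Q M₂ hQ₂)) :
    ∃ S, IsQuasiInverse S Q := by
  obtain ⟨K₁, K₂, hK₁, hK₂, h₁, h₂⟩ := hS₁
  obtain ⟨K₃, K₄, hK₃, hK₄, h₃, h₄⟩ := hS₂
  set ι₁ := M₁.subtypeL with hι₁
  set ι₂ := M₂.subtypeL with hι₂
  set π₁ : V →L[ℍᵐᵒᵖ] ↥M₁ := P₁.codRestrict M₁ hP₁mem with hπ₁
  set π₂ : V →L[ℍᵐᵒᵖ] ↥M₂ := P₂.codRestrict M₂ hP₂mem with hπ₂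
  have hcompact : ∀ (A : ↥M₁ →L[ℍᵐᵒᵖ] ↥M₁) (B : ↥M₂ →L[ℍᵐᵒᵖ] ↥M₂),
      IsCompactOp A → IsCompactOp B →
      IsCompactOp (ι₁.comp (A.comp π₁) + ι₂.comp (B.comp π₂)) := by
    intro A B hA hB
    rw [compactOp_iff]
    have hA' : IsCompactOperator ⇑(ι₁.comp (A.comp π₁)) :=
      (((compactOp_iff A).mp hA).comp_clm π₁).clm_comp ι₁
    have hB' : IsCompactOperator ⇑(ι₂.comp (B.comp π₂)) :=
      (((compactOp_iff B).mp hB).comp_clm π₂).clm_comp ι₂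
    have e : ⇑(ι₁.comp (A.comp π₁) + ι₂.comp (B.comp π₂))
        = ⇑(ι₁.comp (A.comp π₁)) + ⇑(ι₂.comp (B.comp π₂)) := by
      funext y; simp
    rw [e]
    exact hA'.add hB'
  -- pointwise identities
  have key₁ : ∀ (x : V), (S₁ (π₁ (Q x)) : V) = P₁ x - (K₁ (π₁ x) : V) := by
    intro x
    have e : π₁ (Q x) = (restrictOp Q M₁ hQ₁) (π₁ x) := by
      apply Subtype.ext
      simpa [hπ₁, restrictOp_coe] using hPQ₁ x
    rw [e]
    have := ContinuousLinearMap.ext_iff.mp h₁ (π₁ x)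
    simp only [ContinuousLinearMap.mul_apply, ContinuousLinearMap.sub_apply,
      ContinuousLinearMap.one_apply] at this
    rw [this]
    simp [hπ₁]
  have key₃ : ∀ (x : V), (S₂ (π₂ (Q x)) : V) = P₂ x - (K₃ (π₂ x) : V) := by
    intro x
    have e : π₂ (Q x) = (restrictOp Q M₂ hQ₂) (π₂ x) := by
      apply Subtype.ext
      simpa [hπ₂, restrictOp_coe] using hPQ₂ x
    rw [e]
    have := ContinuousLinearMap.ext_iff.mp h₃ (π₂ x)
    simp only [ContinuousLinearMap.mul_apply, ContinuousLinearMap.sub_apply,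
      ContinuousLinearMap.one_apply] at this
    rw [this]
    simp [hπ₂]
  have key₂ : ∀ (x : V), Q (S₁ (π₁ x) : V) = P₁ x - (K₂ (π₁ x) : V) := by
    intro x
    have e : Q ((S₁ (π₁ x)) : V) = ((restrictOp Q M₁ hQ₁) (S₁ (π₁ x)) : V) := rfl
    rw [e]
    have := ContinuousLinearMap.ext_iff.mp h₂ (π₁ x)
    simp only [ContinuousLinearMap.mul_apply, ContinuousLinearMap.sub_apply,
      ContinuousLinearMap.one_apply] at this
    rw [this]
    simp [hπ₁]
  have key₄ : ∀ (x : V), Q (S₂ (π₂ x) : V) = P₂ x - (K₄ (π₂ x) : V) := by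
    intro x
    have e : Q ((S₂ (π₂ x)) : V) = ((restrictOp Q M₂ hQ₂) (S₂ (π₂ x)) : V) := rfl
    rw [e]
    have := ContinuousLinearMap.ext_iff.mp h₄ (π₂ x)
    simp only [ContinuousLinearMap.mul_apply, ContinuousLinearMap.sub_apply,
      ContinuousLinearMap.one_apply] at this
    rw [this]
    simp [hπ₂]
  refine ⟨ι₁.comp (S₁.comp π₁) + ι₂.comp (S₂.comp π₂),
    ι₁.comp (K₁.comp π₁) + ι₂.comp (K₃.comp π₂),
    ι₁.comp (K₂.comp π₁) + ι₂.comp (K₄.comp π₂),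
    hcompact _ _ hK₁ hK₃, hcompact _ _ hK₂ hK₄, ?_, ?_⟩
  · ext x
    simp only [ContinuousLinearMap.mul_apply, ContinuousLinearMap.add_apply,
      ContinuousLinearMap.comp_apply, ContinuousLinearMap.sub_apply,
      ContinuousLinearMap.one_apply, hι₁, hι₂, Submodule.subtypeL_apply]
    rw [key₁ x, key₃ x]
    rw [show P₁ x - (K₁ (π₁ x) : V) + (P₂ x - (K₃ (π₂ x) : V))
        = (P₁ x + P₂ x) - ((K₁ (π₁ x) : V) + (K₃ (π₂ x) : V)) by abel, hsum x]
  · ext x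
    simp only [ContinuousLinearMap.mul_apply, ContinuousLinearMap.add_apply,
      ContinuousLinearMap.comp_apply, ContinuousLinearMap.sub_apply,
      ContinuousLinearMap.one_apply, hι₁, hι₂, Submodule.subtypeL_apply, map_add]
    rw [key₂ x, key₄ x]
    rw [show P₁ x - (K₂ (π₁ x) : V) + (P₂ x - (K₄ (π₂ x) : V))
        = (P₁ x + P₂ x) - ((K₂ (π₁ x) : V) + (K₄ (π₂ x) : V)) by abel, hsum x]

end AuxSub

theorem stmt2 {V : Type*} [NormedAddCommGroup V] [NormedSpace ℝ V] [CompleteSpace V]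
    [Module ℍᵐᵒᵖ V] [IsScalarTower ℝ ℍᵐᵒᵖ V] [SMulCommClass ℍᵐᵒᵖ ℝ V]
    (hnorm : ∀ (x : V) (q : ℍ), ‖op q • x‖ = ‖x‖ * ‖q‖)
    (T P₁ : V →L[ℍᵐᵒᵖ] V) (hproj : P₁ * P₁ = P₁) (hcomm : T * P₁ = P₁ * T) :
    ∃ (h₁ : ∀ x ∈ LinearMap.range (P₁ : V →ₗ[ℍᵐᵒᵖ] V), T x ∈ LinearMap.range (P₁ : V →ₗ[ℍᵐᵒᵖ] V))
      (h₂ : ∀ x ∈ LinearMap.range ((1 - P₁ : V →L[ℍᵐᵒᵖ] V) : V →ₗ[ℍᵐᵒᵖ] V), T x ∈ LinearMap.range ((1 - P₁ : V →L[ℍᵐᵒᵖ] V) : V →ₗ[ℍᵐᵒᵖ] V)),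
      IsClosed ((LinearMap.range (P₁ : V →ₗ[ℍᵐᵒᵖ] V) : Submodule ℍᵐᵒᵖ V) : Set V) ∧
      IsClosed ((LinearMap.range ((1 - P₁ : V →L[ℍᵐᵒᵖ] V) : V →ₗ[ℍᵐᵒᵖ] V) : Submodule ℍᵐᵒᵖ V) : Set V) ∧
      essSpectrum T =
        essSpectrum (restrictOp T (LinearMap.range (P₁ : V →ₗ[ℍᵐᵒᵖ] V)) h₁) ∪
          essSpectrum (restrictOp T (LinearMap.range ((1 - P₁ : V →L[ℍᵐᵒᵖ] V) : V →ₗ[ℍᵐᵒᵖ] V)) h₂) := by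
  set P₂ : V →L[ℍᵐᵒᵖ] V := 1 - P₁ with hP₂
  set M₁ : Submodule ℍᵐᵒᵖ V := LinearMap.range (P₁ : V →ₗ[ℍᵐᵒᵖ] V) with hM₁
  set M₂ : Submodule ℍᵐᵒᵖ V := LinearMap.range (P₂ : V →ₗ[ℍᵐᵒᵖ] V) with hM₂
  have hproj' : ∀ x, P₁ (P₁ x) = P₁ x := by
    intro x
    have := ContinuousLinearMap.ext_iff.mp hproj x
    simpa using this
  have hcomm' : ∀ x, T (P₁ x) = P₁ (T x) := by
    intro x
    have := ContinuousLinearMap.ext_iff.mp hcomm x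
    simpa using this
  have hP₂ap : ∀ x, P₂ x = x - P₁ x := by
    intro x; simp [hP₂]
  have hP₂proj' : ∀ x, P₂ (P₂ x) = P₂ x := by
    intro x
    simp only [hP₂ap, map_sub, hproj']
    abel
  have hcomm₂' : ∀ x, T (P₂ x) = P₂ (T x) := by
    intro x
    simp only [hP₂ap, map_sub, hcomm']
  have hP₁mem : ∀ x, P₁ x ∈ M₁ := fun x => ⟨x, rfl⟩
  have hP₂mem : ∀ x, P₂ x ∈ M₂ := fun x => ⟨x, rfl⟩
  have hP₁fix : ∀ x ∈ M₁, P₁ x = x := by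
    rintro x ⟨y, rfl⟩; exact hproj' y
  have hP₂fix : ∀ x ∈ M₂, P₂ x = x := by
    rintro x ⟨y, rfl⟩; exact hP₂proj' y
  have h₁ : ∀ x ∈ M₁, T x ∈ M₁ := by
    rintro x ⟨y, rfl⟩
    exact ⟨T y, (hcomm' y).symm⟩
  have h₂ : ∀ x ∈ M₂, T x ∈ M₂ := by
    rintro x ⟨y, rfl⟩
    exact ⟨T y, (hcomm₂' y).symm⟩
  have hsum : ∀ x, P₁ x + P₂ x = x := by
    intro x; rw [hP₂ap]; abel
  have hclosed₁ : IsClosed ((M₁ : Submodule ℍᵐᵒᵖ V) : Set V) := by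
    have e : ((M₁ : Submodule ℍᵐᵒᵖ V) : Set V) = ⇑P₂ ⁻¹' {0} := by
      ext x
      constructor
      · rintro ⟨y, rfl⟩
        have : P₂ (P₁ y) = 0 := by rw [hP₂ap, hproj', sub_self]
        simpa using this
      · intro hx
        have hx0 : P₂ x = 0 := hx
        have hpx : P₁ x = x := by
          have h := hP₂ap x
          rw [hx0] at h
          exact (sub_eq_zero.mp h.symm).symm
        exact ⟨x, hpx⟩
    rw [e]
    exact isClosed_singleton.preimage P₂.continuous
  have hclosed₂ : IsClosed ((M₂ : Submodule ℍᵐᵒᵖ V) : Set V) := by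
    have e : ((M₂ : Submodule ℍᵐᵒᵖ V) : Set V) = ⇑P₁ ⁻¹' {0} := by
      ext x
      constructor
      · rintro ⟨y, rfl⟩
        have : P₁ (P₂ y) = 0 := by
          rw [hP₂ap, map_sub, hproj', sub_self]
        simpa using this
      · intro hx
        have hx0 : P₁ x = 0 := hx
        have hpx : P₂ x = x := by rw [hP₂ap, hx0, sub_zero]
        exact ⟨x, hpx⟩
    rw [e]
    exact isClosed_singleton.preimage P₁.continuous
  -- commutation of Qs with the projections
  have hPQ₁ : ∀ q (x : V), P₁ (Qs T q x) = Qs T q (P₁ x) := by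
    intro q x
    rw [Qs_apply, Qs_apply, map_add, map_sub, clm_smul_real, clm_smul_real,
      hcomm', hcomm']
  have hPQ₂ : ∀ q (x : V), P₂ (Qs T q x) = Qs T q (P₂ x) := by
    intro q x
    rw [Qs_apply, Qs_apply, map_add, map_sub, clm_smul_real, clm_smul_real,
      hcomm₂', hcomm₂']
  refine ⟨h₁, h₂, hclosed₁, hclosed₂, ?_⟩
  have key : ∀ q : ℍ, (∃ S, IsQuasiInverse S (Qs T q)) ↔
      ((∃ S, IsQuasiInverse S (Qs (restrictOp T M₁ h₁) q)) ∧
       (∃ S, IsQuasiInverse S (Qs (restrictOp T M₂ h₂) q))) := by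
    intro q
    constructor
    · rintro ⟨S, hS⟩
      constructor
      · rw [Qs_restrictOp T M₁ h₁ q]
        exact quasi_down (Qs T q) P₁ M₁ hclosed₁ hP₁mem hP₁fix (hPQ₁ q)
          (Qs_inv T M₁ h₁ q) hS
      · rw [Qs_restrictOp T M₂ h₂ q]
        exact quasi_down (Qs T q) P₂ M₂ hclosed₂ hP₂mem hP₂fix (hPQ₂ q)
          (Qs_inv T M₂ h₂ q) hS
    · rintro ⟨⟨S₁, hS₁⟩, ⟨S₂, hS₂⟩⟩
      rw [Qs_restrictOp T M₁ h₁ q] at hS₁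
      rw [Qs_restrictOp T M₂ h₂ q] at hS₂
      exact quasi_up (Qs T q) P₁ P₂ M₁ M₂ hP₁mem hP₂mem hP₁fix hP₂fix (hPQ₁ q)
        (hPQ₂ q) hsum (Qs_inv T M₁ h₁ q) (Qs_inv T M₂ h₂ q) hS₁ hS₂
  ext q
  simp only [essSpectrum, Set.mem_setOf_eq, Set.mem_union]
  rw [← not_and_or]
  exact not_congr (key q)
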